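/- Let X be a Banach space, a ∈ X, and (x_ξ)_{ξ∈Ξ} a family in X with ‖πx_ξ‖ ≤ ‖πa‖ for all ξ and every L-projection π. Then for every partition of unity (π_ξ)_{ξ∈Ξ} of L-projections (pairwise disjoint with supremum the identity in the Boolean algebra of L-projections) there exists a unique x ∈ X with π_ξ x = π_ξ x_ξ for all ξ; moreover x = Σ_ξ π_ξ x_ξ (the net of finite partial sums converges in norm) and ‖πx‖ ≤ ‖πa‖ for every L-projection π. -/

import Mathlib

def IsLProj {X : Type*} [NormedAddCommGroup X] [NormedSpace ℝ X]
    (π : X →L[ℝ] X) : Prop :=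
  π.comp π = π ∧ ∀ x, ‖x‖ = ‖π x‖ + ‖x - π x‖

section aux

variable {X : Type*} [NormedAddCommGroup X] [NormedSpace ℝ X]

lemma IsLProj.idem {P : X →L[ℝ] X} (hP : IsLProj P) (x : X) : P (P x) = P x := by
  have := congrArg (fun f : X →L[ℝ] X => f x) hP.1
  simpa using this

lemma IsLProj.norm_apply_le {P : X →L[ℝ] X} (hP : IsLProj P) (x : X) : ‖P x‖ ≤ ‖x‖ := by
  have := hP.2 x
  have h0 := norm_nonneg (x - P x)
  linarith

/-- Key lemma: for L-projections `P`, `Q`, one has `Q P Q = P Q`. -/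
lemma IsLProj.key {P Q : X →L[ℝ] X} (hP : IsLProj P) (hQ : IsLProj Q) (x : X) :
    Q (P (Q x)) = P (Q x) := by
  have hq : Q (Q x) = Q x := hQ.idem x
  have h1 : ‖Q x‖ = ‖P (Q x)‖ + ‖Q x - P (Q x)‖ := hP.2 (Q x)
  have h2 : ‖P (Q x)‖ = ‖Q (P (Q x))‖ + ‖P (Q x) - Q (P (Q x))‖ := hQ.2 _
  have h3 : ‖Q x - P (Q x)‖
      = ‖Q (Q x - P (Q x))‖ + ‖(Q x - P (Q x)) - Q (Q x - P (Q x))‖ := hQ.2 _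
  have h4 : Q (Q x - P (Q x)) = Q x - Q (P (Q x)) := by rw [map_sub, hq]
  have h5 : (Q x - P (Q x)) - (Q x - Q (P (Q x))) = Q (P (Q x)) - P (Q x) := by abel
  have h6 : ‖Q x‖ ≤ ‖Q (P (Q x))‖ + ‖Q x - Q (P (Q x))‖ := by
    calc ‖Q x‖ = ‖Q (P (Q x)) + (Q x - Q (P (Q x)))‖ := by rw [add_sub_cancel]
    _ ≤ _ := norm_add_le _ _
  rw [h4, h5] at h3
  have h7 : ‖Q (P (Q x)) - P (Q x)‖ = ‖P (Q x) - Q (P (Q x))‖ := norm_sub_rev _ _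
  rw [h7] at h3
  have : ‖P (Q x) - Q (P (Q x))‖ = 0 := by
    have hn := norm_nonneg (P (Q x) - Q (P (Q x)))
    linarith
  have := norm_eq_zero.mp this
  have := sub_eq_zero.mp this
  exact this.symm

lemma IsLProj.compl {Q : X →L[ℝ] X} (hQ : IsLProj Q) :
    IsLProj (ContinuousLinearMap.id ℝ X - Q) := by
  constructor
  · ext u
    simp only [ContinuousLinearMap.comp_apply, ContinuousLinearMap.sub_apply,
      ContinuousLinearMap.id_apply, map_sub, hQ.idem]
    abel
  · intro u
    have := hQ.2 u
    simp only [ContinuousLinearMap.sub_apply, ContinuousLinearMap.id_apply, sub_sub_cancel]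
    linarith

/-- L-projections commute. -/
lemma IsLProj.comm {P Q : X →L[ℝ] X} (hP : IsLProj P) (hQ : IsLProj Q) (x : X) :
    Q (P x) = P (Q x) := by
  have h1 := hP.key hQ x
  have h2 := hP.key hQ.compl x
  simp only [ContinuousLinearMap.sub_apply, ContinuousLinearMap.id_apply] at h2
  -- h2 : P (x - Q x) - Q (P (x - Q x)) = P (x - Q x)
  have h3 : Q (P (x - Q x)) = 0 := sub_eq_self.mp h2
  rw [map_sub, map_sub, h1] at h3
  exact sub_eq_zero.mp h3

/-- product of L-projections is an L-projection -/
lemma IsLProj.comp_isLProj {P Q : X →L[ℝ] X} (hP : IsLProj P) (hQ : IsLProj Q) :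
    IsLProj (P.comp Q) := by
  constructor
  · ext u
    simp only [ContinuousLinearMap.comp_apply]
    rw [hP.key hQ u, hP.idem]
  · intro u
    have h1 := hQ.2 u
    have h2 := hP.2 (Q u)
    have h3 := hQ.2 (u - P (Q u))
    have h4 : Q (u - P (Q u)) = Q u - P (Q u) := by
      rw [map_sub, hP.key hQ u]
    rw [h4] at h3
    have h5 : u - P (Q u) - (Q u - P (Q u)) = u - Q u := by abel
    rw [h5] at h3
    simp only [ContinuousLinearMap.comp_apply]
    linarith

/-- norm additivity for a vector fixed by `P` plus a vector killed by `P`. -/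
lemma IsLProj.norm_add_of {P : X →L[ℝ] X} (hP : IsLProj P) {u v : X}
    (hu : P u = u) (hv : P v = 0) : ‖u + v‖ = ‖u‖ + ‖v‖ := by
  have := hP.2 (u + v)
  rw [map_add, hu, hv, add_zero] at this
  have h5 : u + v - u = v := by abel
  rw [h5] at this
  exact this

end aux

section sums

variable {X : Type*} [NormedAddCommGroup X] [NormedSpace ℝ X]

lemma IsLProj.add_isLProj {P Q : X →L[ℝ] X} (hP : IsLProj P) (hQ : IsLProj Q)
    (hPQ : ∀ u, P (Q u) = 0) (hQP : ∀ u, Q (P u) = 0) : IsLProj (P + Q) := by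
  constructor
  · ext u
    simp only [ContinuousLinearMap.comp_apply, ContinuousLinearMap.add_apply, map_add,
      hP.idem, hQ.idem, hPQ, hQP, add_zero, zero_add]
  · intro u
    have h1 : ‖u‖ = ‖P u‖ + ‖u - P u‖ := hP.2 u
    have h2 : ‖u - P u‖ = ‖Q (u - P u)‖ + ‖(u - P u) - Q (u - P u)‖ := hQ.2 _
    have h3 : Q (u - P u) = Q u := by rw [map_sub, hQP, sub_zero]
    rw [h3] at h2
    have h4 : ‖P u + Q u‖ = ‖P u‖ + ‖Q u‖ := hP.norm_add_of (hP.idem u) (hPQ u)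
    have h5 : u - P u - Q u = u - (P u + Q u) := by abel
    rw [h5] at h2
    simp only [ContinuousLinearMap.add_apply]
    rw [h4]
    linarith

variable {ι : Type*} {π : ι → (X →L[ℝ] X)}

lemma disj_pointwise (hdisj : ∀ ξ η, ξ ≠ η → (π ξ).comp (π η) = 0) :
    ∀ ξ η, ξ ≠ η → ∀ u, π ξ (π η u) = 0 := by
  intro ξ η h u
  have := congrArg (fun f : X →L[ℝ] X => f u) (hdisj ξ η h)
  simpa using this

lemma sum_isLProj (hL : ∀ ξ, IsLProj (π ξ))
    (hdisj : ∀ ξ η, ξ ≠ η → (π ξ).comp (π η) = 0) (F : Finset ι) :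
    IsLProj (∑ ξ ∈ F, π ξ) := by
  classical
  induction F using Finset.induction_on with
  | empty =>
    constructor
    · ext u; simp
    · intro u; simp
  | insert b F' hnot ih =>
    rw [Finset.sum_insert hnot]
    refine (hL b).add_isLProj ih ?_ ?_
    · intro u
      rw [ContinuousLinearMap.sum_apply, map_sum]
      refine Finset.sum_eq_zero fun ξ hξ => ?_
      exact disj_pointwise hdisj b ξ (fun h => hnot (h ▸ hξ)) u
    · intro u
      rw [ContinuousLinearMap.sum_apply]
      refine Finset.sum_eq_zero fun ξ hξ => ?_
      exact disj_pointwise hdisj ξ b (fun h => hnot (h ▸ hξ)) u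

lemma sum_norm_eq (hL : ∀ ξ, IsLProj (π ξ))
    (hdisj : ∀ ξ η, ξ ≠ η → (π ξ).comp (π η) = 0) (F : Finset ι) (u : X) :
    ∑ ξ ∈ F, ‖π ξ u‖ = ‖(∑ ξ ∈ F, π ξ) u‖ := by
  classical
  induction F using Finset.induction_on with
  | empty => simp
  | insert b F' hnot ih =>
    rw [Finset.sum_insert hnot, Finset.sum_insert hnot, ih,
      ContinuousLinearMap.add_apply]
    refine ((hL b).norm_add_of ((hL b).idem u) ?_).symm
    rw [ContinuousLinearMap.sum_apply, map_sum]
    refine Finset.sum_eq_zero fun ξ hξ => ?_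
    exact disj_pointwise hdisj b ξ (fun h => hnot (h ▸ hξ)) u

lemma sum_norm_le (hL : ∀ ξ, IsLProj (π ξ))
    (hdisj : ∀ ξ η, ξ ≠ η → (π ξ).comp (π η) = 0) (F : Finset ι) (u : X) :
    ∑ ξ ∈ F, ‖π ξ u‖ ≤ ‖u‖ := by
  rw [sum_norm_eq hL hdisj F u]
  exact (sum_isLProj hL hdisj F).norm_apply_le u

end sums

theorem lproj_mixing {X : Type*} [NormedAddCommGroup X] [NormedSpace ℝ X]
    [CompleteSpace X] {ι : Type*} (a : X) (x : ι → X) (π : ι → (X →L[ℝ] X))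
    (hx : ∀ ξ, ∀ ρ : X →L[ℝ] X, IsLProj ρ → ‖ρ (x ξ)‖ ≤ ‖ρ a‖)
    (hL : ∀ ξ, IsLProj (π ξ))
    (hdisj : ∀ ξ η, ξ ≠ η → (π ξ).comp (π η) = 0)
    (hsup : ∀ ρ : X →L[ℝ] X, IsLProj ρ → (∀ ξ, ρ.comp (π ξ) = π ξ) →
      ρ = ContinuousLinearMap.id ℝ X) :
    ∃ y : X, (∀ ξ, π ξ y = π ξ (x ξ)) ∧
      HasSum (fun ξ => π ξ (x ξ)) y ∧
      (∀ ρ : X →L[ℝ] X, IsLProj ρ → ‖ρ y‖ ≤ ‖ρ a‖) ∧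
      ∀ z : X, (∀ ξ, π ξ z = π ξ (x ξ)) → z = y := by
  classical
  have hz := disj_pointwise hdisj
  have hbound : ∀ u : X, ∀ F : Finset ι, ∑ ξ ∈ F, ‖π ξ u‖ ≤ ‖u‖ :=
    fun u F => sum_norm_le hL hdisj F u
  have hsumnorm : ∀ u : X, Summable fun ξ => ‖π ξ u‖ :=
    fun u => summable_of_sum_le (fun ξ => norm_nonneg _) (hbound u)
  have hsumm : ∀ u : X, Summable fun ξ => π ξ u :=
    fun u => (hsumnorm u).of_norm
  -- the "sum of the partition" operator
  let Pl : X →ₗ[ℝ] X :=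
    { toFun := fun u => ∑' ξ, π ξ u
      map_add' := fun u v => by
        rw [← Summable.tsum_add (hsumm u) (hsumm v)]
        exact tsum_congr fun ξ => map_add _ _ _
      map_smul' := fun c u => by
        rw [RingHom.id_apply, ← ((hsumm u).hasSum.const_smul c).tsum_eq]
        exact tsum_congr fun ξ => (map_smul (π ξ) c u) }
  have hPlnorm : ∀ u : X, ‖Pl u‖ ≤ 1 * ‖u‖ := by
    intro u
    rw [one_mul]
    calc ‖Pl u‖ ≤ ∑' ξ, ‖π ξ u‖ := norm_tsum_le_tsum_norm (hsumnorm u)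
    _ ≤ ‖u‖ := Summable.tsum_le_of_sum_le (hsumnorm u) (hbound u)
  let P : X →L[ℝ] X := Pl.mkContinuous 1 hPlnorm
  have hPapp : ∀ u : X, HasSum (fun ξ => π ξ u) (P u) := fun u => (hsumm u).hasSum
  have hπP : ∀ η u, π η (P u) = π η u := by
    intro η u
    have h1 := (hPapp u).mapL (π η)
    have h2 : HasSum (fun ξ => π η (π ξ u)) (π η (π η u)) :=
      hasSum_single η fun ξ hξ => hz η ξ (Ne.symm hξ) u
    rw [(hL η).idem u] at h2
    exact h1.unique h2
  have hPL : IsLProj P := by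
    constructor
    · ext u
      have h1 : HasSum (fun ξ => π ξ (P u)) (P (P u)) := hPapp (P u)
      have h2 : (fun ξ => π ξ (P u)) = fun ξ => π ξ u := funext fun ξ => hπP ξ u
      rw [h2] at h1
      exact h1.unique (hPapp u)
    · intro u
      have ht : Filter.Tendsto (fun F : Finset ι => ∑ ξ ∈ F, π ξ u)
          Filter.atTop (nhds (P u)) := hPapp u
      have ht2 : Filter.Tendsto
          (fun F : Finset ι => ‖∑ ξ ∈ F, π ξ u‖ + ‖u - ∑ ξ ∈ F, π ξ u‖)
          Filter.atTop (nhds (‖P u‖ + ‖u - P u‖)) :=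
        (ht.norm).add ((Filter.Tendsto.sub tendsto_const_nhds ht).norm)
      have ht3 : ∀ F : Finset ι, ‖∑ ξ ∈ F, π ξ u‖ + ‖u - ∑ ξ ∈ F, π ξ u‖ = ‖u‖ := by
        intro F
        have := (sum_isLProj hL hdisj F).2 u
        rw [ContinuousLinearMap.sum_apply] at this
        linarith
      have ht4 : Filter.Tendsto (fun _ : Finset ι => ‖u‖)
          Filter.atTop (nhds (‖P u‖ + ‖u - P u‖)) := by
        simpa only [ht3] using ht2
      exact (tendsto_nhds_unique tendsto_const_nhds ht4)
  have hPid : P = ContinuousLinearMap.id ℝ X := by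
    refine hsup P hPL fun ξ => ?_
    ext u
    have h1 : HasSum (fun η => π η (π ξ u)) (P (π ξ u)) := hPapp _
    have h2 : HasSum (fun η => π η (π ξ u)) (π ξ (π ξ u)) :=
      hasSum_single ξ fun η hη => hz η ξ hη u
    have := h1.unique h2
    simpa [(hL ξ).idem u] using this
  -- the mixed element
  have hterm0 : ∀ ξ, ‖π ξ (x ξ)‖ ≤ ‖π ξ a‖ := fun ξ => hx ξ (π ξ) (hL ξ)
  have hsnx : Summable fun ξ => ‖π ξ (x ξ)‖ :=
    Summable.of_nonneg_of_le (fun ξ => norm_nonneg _) hterm0 (hsumnorm a)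
  have hsx : Summable fun ξ => π ξ (x ξ) := hsnx.of_norm
  refine ⟨∑' ξ, π ξ (x ξ), ?_, hsx.hasSum, ?_, ?_⟩
  · intro ξ
    have h1 := hsx.hasSum.mapL (π ξ)
    have h2 : HasSum (fun η => π ξ (π η (x η))) (π ξ (π ξ (x ξ))) :=
      hasSum_single ξ fun η hη => hz ξ η (Ne.symm hη) (x η)
    rw [(hL ξ).idem (x ξ)] at h2
    exact h1.unique h2
  · intro ρ hρ
    have hterm : ∀ ξ, ‖ρ (π ξ (x ξ))‖ ≤ ‖π ξ (ρ a)‖ := by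
      intro ξ
      have h1 : ‖(ρ.comp (π ξ)) (x ξ)‖ ≤ ‖(ρ.comp (π ξ)) a‖ :=
        hx ξ _ (hρ.comp_isLProj (hL ξ))
      simp only [ContinuousLinearMap.comp_apply] at h1
      rwa [← hρ.comm (hL ξ) a] at h1
    have hsn : Summable fun ξ => ‖ρ (π ξ (x ξ))‖ :=
      Summable.of_nonneg_of_le (fun ξ => norm_nonneg _) hterm (hsumnorm (ρ a))
    have hρy := hsx.hasSum.mapL ρ
    calc ‖ρ (∑' ξ, π ξ (x ξ))‖ = ‖∑' ξ, ρ (π ξ (x ξ))‖ := by rw [hρy.tsum_eq]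
    _ ≤ ∑' ξ, ‖ρ (π ξ (x ξ))‖ := norm_tsum_le_tsum_norm hsn
    _ ≤ ∑' ξ, ‖π ξ (ρ a)‖ := Summable.tsum_le_tsum hterm hsn (hsumnorm (ρ a))
    _ ≤ ‖ρ a‖ := Summable.tsum_le_of_sum_le (hsumnorm (ρ a)) (hbound (ρ a))
  · intro z hzz
    set y := ∑' ξ, π ξ (x ξ) with hy
    have hπy : ∀ ξ, π ξ y = π ξ (x ξ) := by
      intro ξ
      have h1 := hsx.hasSum.mapL (π ξ)
      have h2 : HasSum (fun η => π ξ (π η (x η))) (π ξ (π ξ (x ξ))) :=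
        hasSum_single ξ fun η hη => hz ξ η (Ne.symm hη) (x η)
      rw [(hL ξ).idem (x ξ)] at h2
      exact h1.unique h2
    have hd : ∀ ξ, π ξ (z - y) = 0 := by
      intro ξ
      rw [map_sub, hzz ξ, hπy ξ, sub_self]
    have h1 : HasSum (fun ξ => π ξ (z - y)) (P (z - y)) := hPapp _
    have h2 : (fun ξ => π ξ (z - y)) = fun _ => (0 : X) := funext hd
    rw [h2] at h1
    have h3 : P (z - y) = 0 := h1.unique hasSum_zero
    have h4 := congrArg (fun f : X →L[ℝ] X => f (z - y)) hPid
    simp only [ContinuousLinearMap.id_apply] at h4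
    rw [h3] at h4
    exact sub_eq_zero.mp h4.symm
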